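/- Let n, d ≥ 2 be integers. An AME(n,d) state of minimal support exists if and only if there exists an MDS code over the alphabet Fin d of wordlength n and minimum distance δ = ⌈n/2⌉ + 1 (equivalently, of combinatorial dimension k = ⌊n/2⌋). -/

import Mathlib

open scoped BigOperators Classical

noncomputable section

namespace AMEPaper

/-- Combine a configuration on the complement of `B` with a configuration on `B`
into a full configuration on `Fin n`. -/
def combine {n d : ℕ} (B : Finset (Fin n)) (a : {i : Fin n // i ∉ B} → Fin d)
    (b : {i : Fin n // i ∈ B} → Fin d) : Fin n → Fin d :=
  fun i => if h : i ∈ B then b ⟨i, h⟩ else a ⟨i, h⟩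

/-- `ψ` is an absolutely maximally entangled state with `n` sites and local dimension `d`:
it is a unit vector and, for every set `B` of at most `n/2` sites, the reduced density
matrix on `B` equals `d ^ (-|B|)` times the identity. -/
def IsAME (n d : ℕ) (ψ : (Fin n → Fin d) → ℂ) : Prop :=
  (∑ s : Fin n → Fin d, ‖ψ s‖ ^ 2 = 1) ∧
  ∀ B : Finset (Fin n), B.card ≤ n / 2 →
    ∀ b b' : {i : Fin n // i ∈ B} → Fin d,
      (∑ a : {i : Fin n // i ∉ B} → Fin d,
          ψ (combine B a b) * (starRingEnd ℂ) (ψ (combine B a b'))) =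
        if b = b' then ((d : ℂ) ^ B.card)⁻¹ else 0

/-- `ψ` has minimal support: its support in the computational basis has exactly
`d ^ ⌊n/2⌋` elements. -/
def HasMinimalSupport (n d : ℕ) (ψ : (Fin n → Fin d) → ℂ) : Prop :=
  {s : Fin n → Fin d | ψ s ≠ 0}.ncard = d ^ (n / 2)

/-- `C` is an MDS code over the alphabet `Fin d` with wordlength `n` and minimum
Hamming distance `δ`: its minimum distance is exactly `δ` and it meets the Singleton
bound, `|C| = d ^ (n - δ + 1)`. -/
def IsMDSCode (d n δ : ℕ) (C : Finset (Fin n → Fin d)) : Prop :=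
  C.card = d ^ (n - δ + 1) ∧
  (∀ w ∈ C, ∀ w' ∈ C, w ≠ w' → δ ≤ hammingDist w w') ∧
  (∃ w ∈ C, ∃ w' ∈ C, w ≠ w' ∧ hammingDist w w' = δ)

/-- A latin `k`-hypercube of order `d`: fixing all indices but any one of them, the
resulting map `Fin d → Fin d` is a bijection. -/
def IsLatinHypercube (k d : ℕ) (L : (Fin k → Fin d) → Fin d) : Prop :=
  ∀ (i : Fin k) (x : Fin k → Fin d),
    Function.Bijective fun v : Fin d => L (Function.update x i v)

/-- Two latin `k`-hypercubes are orthogonal if for every pair of distinct indices and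
all ways of fixing the remaining indices, the two resulting latin squares are
orthogonal. -/
def AreOrthogonalHypercubes (k d : ℕ) (L M : (Fin k → Fin d) → Fin d) : Prop :=
  ∀ (i j : Fin k), i ≠ j → ∀ x : Fin k → Fin d,
    Function.Injective fun p : Fin d × Fin d =>
      (L (Function.update (Function.update x i p.1) j p.2),
       M (Function.update (Function.update x i p.1) j p.2))

/-- A latin square of order `d`: every row and every column is a bijection. -/
def IsLatinSquare (d : ℕ) (L : Fin d × Fin d → Fin d) : Prop :=
  (∀ i : Fin d, Function.Bijective fun j => L (i, j)) ∧
  (∀ j : Fin d, Function.Bijective fun i => L (i, j))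


/-- Restriction of a configuration to a subset of sites. -/
def res {n d : ℕ} (B : Finset (Fin n)) (s : Fin n → Fin d) :
    {i : Fin n // i ∈ B} → Fin d := fun i => s i.1

lemma res_combine {n d : ℕ} (B : Finset (Fin n)) (a : {i : Fin n // i ∉ B} → Fin d)
    (b : {i : Fin n // i ∈ B} → Fin d) : res B (combine B a b) = b := by
  funext i
  exact dif_pos i.2

lemma card_cfg {n d : ℕ} (B : Finset (Fin n)) :
    Fintype.card ({i : Fin n // i ∈ B} → Fin d) = d ^ B.card := by
  simp [Fintype.card_fun]

lemma hamming_le_of_agree_outside {n d : ℕ} {s s' : Fin n → Fin d} {B : Finset (Fin n)}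
    (h : ∀ i, i ∉ B → s i = s' i) : hammingDist s s' ≤ B.card := by
  classical
  have h1 : hammingDist s s' = (Finset.univ.filter fun i => s i ≠ s' i).card := rfl
  rw [h1]
  refine Finset.card_le_card (fun i hi => ?_)
  simp only [Finset.mem_filter] at hi
  by_contra hb
  exact hi.2 (h i hb)

lemma hamming_add_agree {n d : ℕ} (s s' : Fin n → Fin d) :
    hammingDist s s' + (Finset.univ.filter fun i => s i = s' i).card = n := by
  classical
  have h := Finset.card_filter_add_card_filter_not
    (s := (Finset.univ : Finset (Fin n))) (p := fun i => s i = s' i)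
  rw [Finset.card_univ, Fintype.card_fin] at h
  rw [add_comm]
  convert h using 2
  rfl

lemma card_extensions {n d : ℕ} {B K : Finset (Fin n)} (hBK : B ⊆ K)
    (b : {i : Fin n // i ∈ B} → Fin d) :
    (Finset.univ.filter (fun c : {i : Fin n // i ∈ K} → Fin d =>
        ∀ (i : Fin n) (h : i ∈ B), c ⟨i, hBK h⟩ = b ⟨i, h⟩)).card = d ^ (K.card - B.card) := by
  classical
  rw [← Fintype.card_subtype]
  have e : {c : {i : Fin n // i ∈ K} → Fin d //
      ∀ (i : Fin n) (h : i ∈ B), c ⟨i, hBK h⟩ = b ⟨i, h⟩} ≃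
      ({i : Fin n // i ∈ K \ B} → Fin d) := by
    refine ⟨fun c j => c.1 ⟨j.1, Finset.sdiff_subset j.2⟩,
      fun a => ⟨fun i => if h : i.1 ∈ B then b ⟨i.1, h⟩
        else a ⟨i.1, Finset.mem_sdiff.mpr ⟨i.2, h⟩⟩, fun i h => dif_pos h⟩, ?_, ?_⟩
    · rintro ⟨c, hc⟩
      apply Subtype.ext
      funext i
      dsimp only
      split
      · next h => exact (hc i.1 h).symm
      · rfl
    · intro a
      funext j
      have hj : j.1 ∉ B := (Finset.mem_sdiff.mp j.2).2
      dsimp only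
      rw [dif_neg hj]
  rw [Fintype.card_congr e, Fintype.card_fun, Fintype.card_coe, Fintype.card_fin,
    Finset.card_sdiff_of_subset hBK]

lemma surj_res {n d : ℕ} {C : Finset (Fin n → Fin d)} {K : Finset (Fin n)}
    (hcard : C.card = d ^ K.card) (hinj : Set.InjOn (res (d := d) K) ↑C) :
    ∀ c : {i : Fin n // i ∈ K} → Fin d, ∃ w ∈ C, res K w = c := by
  classical
  have himg : (C.image (res K)).card = Fintype.card ({i : Fin n // i ∈ K} → Fin d) := by
    rw [Finset.card_image_of_injOn hinj, hcard, card_cfg]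
  have huniv := Finset.eq_univ_of_card _ himg
  intro c
  have hc : c ∈ C.image (res K) := huniv ▸ Finset.mem_univ c
  simpa [Finset.mem_image] using hc

lemma card_fiber {n d k : ℕ} {C : Finset (Fin n → Fin d)} (hk : k ≤ n)
    (hcard : C.card = d ^ k)
    (hinj : ∀ K : Finset (Fin n), K.card = k → Set.InjOn (res (d := d) K) ↑C)
    {B : Finset (Fin n)} (hB : B.card ≤ k) (b : {i : Fin n // i ∈ B} → Fin d) :
    (Finset.univ.filter (fun a : {i : Fin n // i ∉ B} → Fin d =>
        combine B a b ∈ C)).card = d ^ (k - B.card) := by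
  classical
  obtain ⟨K, hBK, hK⟩ := Finset.exists_superset_card_eq hB (by simpa using hk)
  have hsurj := surj_res (by rwa [hK]) (hinj K hK)
  have hkk : k - B.card = K.card - B.card := by rw [hK]
  rw [hkk, ← card_extensions hBK b]
  refine Finset.card_bij (fun a _ => res K (combine B a b)) ?_ ?_ ?_
  · intro a ha
    simp only [Finset.mem_filter, Finset.mem_univ, true_and] at ha ⊢
    intro i h
    exact dif_pos h
  · intro a₁ ha₁ a₂ ha₂ heq
    simp only [Finset.mem_filter, Finset.mem_univ, true_and] at ha₁ ha₂
    have hcc := hinj K hK ha₁ ha₂ heq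
    funext j
    have h₁ : combine B a₁ b j.1 = a₁ j := by
      unfold combine; rw [dif_neg j.2]
    have h₂ : combine B a₂ b j.1 = a₂ j := by
      unfold combine; rw [dif_neg j.2]
    rw [← h₁, ← h₂, hcc]
  · intro c hc
    simp only [Finset.mem_filter, Finset.mem_univ, true_and] at hc
    obtain ⟨w, hwC, hw⟩ := hsurj c
    refine ⟨fun j => w j.1, ?_, ?_⟩
    all_goals
      have hcomb : combine B (fun j : {i : Fin n // i ∉ B} => w j.1) b = w := by
        funext i
        unfold combine
        split
        · next h =>
          have hwi : w i = c ⟨i, hBK h⟩ := by rw [← hw]; rfl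
          rw [hwi, hc i h]
        · rfl
    · simp only [Finset.mem_filter, Finset.mem_univ, true_and, hcomb]
      exact hwC
    · show res K (combine B (fun j : {i : Fin n // i ∉ B} => w j.1) b) = c
      rw [hcomb, hw]

/-- A minimally supported `AME(n,d)` state exists iff there is an MDS code over `Fin d`
with wordlength `n` and minimum distance `δ = ⌈n/2⌉ + 1`. -/
theorem ame_iff_mds (n d : ℕ) (hn : 2 ≤ n) (hd : 2 ≤ d) :
    (∃ ψ : (Fin n → Fin d) → ℂ, IsAME n d ψ ∧ HasMinimalSupport n d ψ) ↔
      (∃ C : Finset (Fin n → Fin d), IsMDSCode d n ((n + 1) / 2 + 1) C) := by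
  classical
  have hk1 : 1 ≤ n / 2 := by omega
  have hkn : n / 2 ≤ n := by omega
  have hδ : (n + 1) / 2 + 1 = n - n / 2 + 1 := by omega
  have hd0 : (d : ℂ) ≠ 0 := by
    exact_mod_cast Nat.cast_ne_zero.mpr (by omega)
  constructor
  · rintro ⟨ψ, ⟨hnorm, hAME⟩, hsupp⟩
    set S := {s : Fin n → Fin d | ψ s ≠ 0} with hSdef
    have hSfin : S.Finite := Set.toFinite S
    set CF := hSfin.toFinset with hCF
    have hCFcard : CF.card = d ^ (n / 2) := by
      rw [← Set.ncard_eq_toFinset_card S hSfin]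
      exact hsupp
    have hres_surj : ∀ B : Finset (Fin n), B.card = n / 2 →
        ∀ b : {i : Fin n // i ∈ B} → Fin d, ∃ s ∈ CF, res B s = b := by
      intro B hB b
      have h := hAME B (le_of_eq hB) b b
      rw [if_pos rfl] at h
      have hne : (∑ a : {i : Fin n // i ∉ B} → Fin d,
          ψ (combine B a b) * (starRingEnd ℂ) (ψ (combine B a b))) ≠ 0 := by
        rw [h]
        exact inv_ne_zero (pow_ne_zero _ hd0)
      obtain ⟨a, -, ha⟩ := Finset.exists_ne_zero_of_sum_ne_zero hne
      refine ⟨combine B a b, ?_, res_combine B a b⟩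
      simp only [hCF, Set.Finite.mem_toFinset, hSdef, Set.mem_setOf_eq]
      intro h0
      rw [h0] at ha
      simp at ha
    have hres_inj : ∀ B : Finset (Fin n), B.card = n / 2 →
        Set.InjOn (res (d := d) B) ↑CF := by
      intro B hB
      apply Finset.injOn_of_card_image_eq
      have hsub : CF.image (res B) = Finset.univ := by
        apply Finset.eq_univ_of_forall
        intro b
        obtain ⟨s, hs, hsb⟩ := hres_surj B hB b
        exact Finset.mem_image.mpr ⟨s, hs, hsb⟩
      rw [hsub, Finset.card_univ, card_cfg, hB, hCFcard]
    have hmd : ∀ s ∈ CF, ∀ s' ∈ CF, s ≠ s' → n - n / 2 + 1 ≤ hammingDist s s' := by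
      intro s hs s' hs' hne
      have hsum := hamming_add_agree s s'
      have hAk : (Finset.univ.filter fun i => s i = s' i).card < n / 2 := by
        by_contra hge
        push_neg at hge
        obtain ⟨B, hBA, hB⟩ := Finset.exists_subset_card_eq hge
        have heq : res (d := d) B s = res B s' := by
          funext i
          have hiA : i.1 ∈ Finset.univ.filter fun j => s j = s' j := hBA i.2
          exact (Finset.mem_filter.mp hiA).2
        exact hne (hres_inj B hB (Finset.mem_coe.mpr hs) (Finset.mem_coe.mpr hs') heq)
      omega
    have h2 : 1 < CF.card := by
      rw [hCFcard]
      exact Nat.one_lt_pow (by omega) (by omega)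
    have hle : ∃ u ∈ CF, ∃ u' ∈ CF, u ≠ u' ∧ hammingDist u u' ≤ n - n / 2 + 1 := by
      by_contra hcon
      push_neg at hcon
      obtain ⟨B, -, hB⟩ := Finset.exists_subset_card_eq
        (show n / 2 - 1 ≤ (Finset.univ : Finset (Fin n)).card by simp; omega)
      have hinj : Set.InjOn (res (d := d) B) ↑CF := by
        intro s hs s' hs' heq
        by_contra hne
        have hd1 := hcon s (Finset.mem_coe.mp hs) s' (Finset.mem_coe.mp hs') hne
        have hBsub : B ⊆ Finset.univ.filter (fun i => s i = s' i) := by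
          intro i hi
          simp only [Finset.mem_filter, Finset.mem_univ, true_and]
          exact congrFun heq ⟨i, hi⟩
        have hcard := Finset.card_le_card hBsub
        have hsum := hamming_add_agree s s'
        omega
      have hcle := Finset.card_le_card_of_injOn (res (d := d) B)
        (fun x _ => Finset.mem_univ _) hinj
      rw [hCFcard, Finset.card_univ, card_cfg, hB] at hcle
      have hpow : d ^ (n / 2 - 1) < d ^ (n / 2) :=
        Nat.pow_lt_pow_right (by omega) (by omega)
      omega
    obtain ⟨u, hu, u', hu', hne, hdle⟩ := hle
    have hdge := hmd u hu u' hu' hne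
    refine ⟨CF, ?_, ?_, u, hu, u', hu', hne, ?_⟩
    · rw [hCFcard]
      congr 1
      omega
    · intro x hx y hy hxy
      rw [hδ]
      exact hmd x hx y hy hxy
    · omega
  · rintro ⟨C, hCcard, hmin, -⟩
    have hCk : C.card = d ^ (n / 2) := by
      rw [hCcard]
      congr 1
      omega
    have hmin' : ∀ w ∈ C, ∀ w' ∈ C, w ≠ w' → n - n / 2 + 1 ≤ hammingDist w w' := by
      intro w hw w' hw' hne
      have := hmin w hw w' hw' hne
      omega
    have hinj : ∀ K : Finset (Fin n), K.card = n / 2 →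
        Set.InjOn (res (d := d) K) ↑C := by
      intro K hK s hs s' hs' heq
      by_contra hne
      have hdist := hmin' s (Finset.mem_coe.mp hs) s' (Finset.mem_coe.mp hs') hne
      have hagree : ∀ i, i ∉ Kᶜ → s i = s' i := by
        intro i hi
        rw [Finset.mem_compl, not_not] at hi
        exact congrFun heq ⟨i, hi⟩
      have hle := hamming_le_of_agree_outside hagree
      rw [Finset.card_compl, Fintype.card_fin, hK] at hle
      omega
    set x : ℝ := (d : ℝ) ^ (n / 2) with hx
    have hx0 : (0 : ℝ) < x := by positivity
    set α : ℝ := (Real.sqrt x)⁻¹ with hα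
    have hα0 : 0 < α := by positivity
    have hαα : α * α = x⁻¹ := by
      rw [hα, ← mul_inv, Real.mul_self_sqrt hx0.le]
    refine ⟨fun s => if s ∈ C then (α : ℂ) else 0, ⟨?_, ?_⟩, ?_⟩
    · have hterm : ∀ s : Fin n → Fin d,
          ‖if s ∈ C then (α : ℂ) else 0‖ ^ 2 = if s ∈ C then x⁻¹ else 0 := by
        intro s
        split
        · rw [Complex.norm_real, Real.norm_eq_abs, abs_of_pos hα0, sq, hαα]
        · simp
      rw [Finset.sum_congr rfl (fun s _ => hterm s), Finset.sum_ite_mem,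
        Finset.univ_inter, Finset.sum_const, nsmul_eq_mul, hCk, hx]
      push_cast
      rw [mul_inv_cancel₀ (by positivity)]
    · intro B hB b b'
      have hterm : ∀ w : Fin n → Fin d,
          (if w ∈ C then (α : ℂ) else 0) * (starRingEnd ℂ) (if w ∈ C then (α : ℂ) else 0)
            = if w ∈ C then ((d : ℂ) ^ (n / 2))⁻¹ else 0 := by
        intro w
        split
        · rw [Complex.conj_ofReal, ← Complex.ofReal_mul, hαα, hx]
          push_cast
          rfl
        · simp
      by_cases hbb : b = b'
      · subst hbb
        rw [if_pos rfl]
        rw [Finset.sum_congr rfl (fun a _ => hterm (combine B a b)), ← Finset.sum_filter,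
          Finset.sum_const, nsmul_eq_mul, card_fiber hkn hCk hinj hB b]
        have hsplit : (d : ℂ) ^ (n / 2 - B.card) * (d : ℂ) ^ B.card = (d : ℂ) ^ (n / 2) := by
          rw [← pow_add]
          congr 1
          omega
        push_cast
        rw [show ((d : ℂ) ^ (n / 2))⁻¹ = ((d : ℂ) ^ (n / 2 - B.card))⁻¹ * ((d : ℂ) ^ B.card)⁻¹ by
            rw [← mul_inv, hsplit],
          ← mul_assoc, mul_inv_cancel₀ (pow_ne_zero _ hd0), one_mul]
      · rw [if_neg hbb]
        apply Finset.sum_eq_zero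
        intro a _
        beta_reduce
        by_cases h1 : combine B a b ∈ C
        · by_cases h2 : combine B a b' ∈ C
          · exfalso
            have hne : combine B a b ≠ combine B a b' := by
              intro h
              exact hbb (by rw [← res_combine B a b, ← res_combine B a b', h])
            have hdist := hmin' _ h1 _ h2 hne
            have hagree : ∀ i, i ∉ B → combine B a b i = combine B a b' i := by
              intro i hi
              unfold combine
              rw [dif_neg hi, dif_neg hi]
            have hle := hamming_le_of_agree_outside hagree
            omega
          · rw [if_neg h2]
            simp
        · rw [if_neg h1, zero_mul]
    · have hset : {s : Fin n → Fin d | (if s ∈ C then (α : ℂ) else 0) ≠ 0} = ↑C := by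
        ext s
        simp only [Set.mem_setOf_eq, Finset.mem_coe]
        constructor
        · intro h
          by_contra hs
          rw [if_neg hs] at h
          exact h rfl
        · intro hs
          rw [if_pos hs]
          exact_mod_cast ne_of_gt hα0
      rw [HasMinimalSupport, hset, Set.ncard_coe_finset, hCk]

end AMEPaper
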